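/- If φ : Γ → Γ has no periodic point, then the generalized shift dynamical system (X^Γ, σ_φ) is Li-Yorke sensitive: there exists κ > 0 such that for every x ∈ X^Γ and every open neighborhood U of x there exists y ∈ U with liminf_{n→∞} D(σ_φ^n(x), σ_φ^n(y)) = 0 and limsup_{n→∞} D(σ_φ^n(x), σ_φ^n(y)) > κ. -/

import Mathlib

open Filter Topology

open scoped Classical in
/-- The metric `D` on `X^Γ`, via a fixed bijection `e : ℕ ≃ Γ`. -/
noncomputable def gsD {X Γ : Type*} (e : ℕ ≃ Γ) (x y : Γ → X) : ℝ :=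
  ∑' n : ℕ, (if x (e n) = y (e n) then (0 : ℝ) else 1) / 2 ^ (n + 1)


section Aux

private lemma orbit_inj {Γ : Type*} (φ : Γ → Γ)
    (hφ : ¬ ∃ a : Γ, ∃ n : ℕ, 1 ≤ n ∧ φ^[n] a = a) (γ : Γ) :
    Function.Injective fun n : ℕ => φ^[n] γ := by
  intro m n h
  simp only at h
  by_contra hne
  wlog hlt : m < n generalizing m n
  · exact this h.symm (Ne.symm hne) (by omega)
  refine hφ ⟨φ^[m] γ, n - m, by omega, ?_⟩
  rw [← Function.iterate_add_apply, Nat.sub_add_cancel hlt.le]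
  exact h.symm

private lemma merge_aux {Γ : Type*} (φ : Γ → Γ)
    (hφ : ¬ ∃ a : Γ, ∃ n : ℕ, 1 ≤ n ∧ φ^[n] a = a) (g0 g : Γ) :
    (∀ n m : ℕ, φ^[n] g ≠ φ^[m] g0) ∨
      ∃ a b : ℕ, ∀ n m : ℕ, φ^[n] g = φ^[m] g0 → a ≤ n ∧ m + a = n + b := by
  classical
  by_cases h : ∃ n : ℕ, ∃ m : ℕ, φ^[n] g = φ^[m] g0
  · right
    obtain ⟨b, hb⟩ := Nat.find_spec h
    refine ⟨Nat.find h, b, fun n m hnm => ?_⟩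
    have hn : Nat.find h ≤ n := Nat.find_min' h ⟨m, hnm⟩
    have : φ^[m] g0 = φ^[(n - Nat.find h) + b] g0 := by
      rw [← hnm, Function.iterate_add_apply, ← hb,
        ← Function.iterate_add_apply, Nat.sub_add_cancel hn]
    have := orbit_inj φ hφ g0 this
    omega
  · left
    push_neg at h
    exact h

end Aux

section GsD

variable {X Γ : Type*} (e : ℕ ≃ Γ) (x y : Γ → X)

open scoped Classical

private lemma gsD_term_nonneg (n : ℕ) :
    (0:ℝ) ≤ (if x (e n) = y (e n) then (0 : ℝ) else 1) / 2 ^ (n + 1) := by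
  split <;> positivity

private lemma gsD_term_le (n : ℕ) :
    (if x (e n) = y (e n) then (0 : ℝ) else 1) / 2 ^ (n + 1) ≤ (1/2) ^ (n+1) := by
  rw [div_pow, one_pow, div_le_div_iff₀ (by positivity) (by positivity), one_mul]
  split <;> simp

private lemma gsD_summable :
    Summable (fun n : ℕ => (if x (e n) = y (e n) then (0 : ℝ) else 1) / 2 ^ (n + 1)) := by
  refine Summable.of_nonneg_of_le (gsD_term_nonneg e x y) (fun n => ?_)
    (summable_geometric_two.mul_right (1/2))
  calc _ ≤ ((1:ℝ)/2) ^ (n+1) := gsD_term_le e x y n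
  _ = (1/2)^n * (1/2) := by ring

private lemma tsum_half_pow_add (k : ℕ) :
    ∑' n : ℕ, ((1:ℝ)/2) ^ (n + k) = 2 * (1/2)^k := by
  have : ∀ n : ℕ, ((1:ℝ)/2) ^ (n + k) = (1/2)^n * (1/2)^k := fun n => pow_add _ _ _
  rw [tsum_congr this, tsum_mul_right, tsum_geometric_two]

private lemma gsD_nonneg : 0 ≤ gsD e x y := tsum_nonneg (gsD_term_nonneg e x y)

private lemma gsD_le_one : gsD e x y ≤ 1 := by
  rw [gsD]
  calc ∑' n : ℕ, (if x (e n) = y (e n) then (0 : ℝ) else 1) / 2 ^ (n + 1)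
      ≤ ∑' n : ℕ, ((1:ℝ)/2) ^ (n + 1) := by
        refine Summable.tsum_le_tsum (gsD_term_le e x y) (gsD_summable e x y) ?_
        exact (summable_nat_add_iff 1).mpr summable_geometric_two
    _ = 1 := by rw [tsum_half_pow_add]; norm_num

private lemma gsD_ge_half (h : x (e 0) ≠ y (e 0)) : 1/2 ≤ gsD e x y := by
  rw [gsD]
  have := Summable.le_tsum (gsD_summable e x y) 0 (fun j _ => gsD_term_nonneg e x y j)
  simpa [h] using this

set_option maxHeartbeats 1000000 in
private lemma gsD_le_pow (N : ℕ) (h : ∀ i ≤ N, x (e i) = y (e i)) :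
    gsD e x y ≤ (1/2) ^ (N + 1) := by
  rw [gsD, ← Summable.sum_add_tsum_nat_add (N+1) (gsD_summable e x y)]
  have h1 : ∑ i ∈ Finset.range (N+1),
      (if x (e i) = y (e i) then (0 : ℝ) else 1) / 2 ^ (i + 1) = 0 := by
    refine Finset.sum_eq_zero fun i hi => ?_
    rw [if_pos (h i (by simpa [Nat.lt_succ_iff] using hi))]
    simp
  rw [h1, zero_add]
  have hg : Summable (fun n : ℕ => ((1:ℝ)/2) ^ (n + (N+2))) :=
    (summable_nat_add_iff (N+2)).mpr summable_geometric_two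
  have hf : Summable (fun n : ℕ =>
      (if x (e (n + (N+1))) = y (e (n + (N+1))) then (0 : ℝ) else 1) / 2 ^ ((n + (N+1)) + 1)) :=
    (summable_nat_add_iff (N+1)).mpr (gsD_summable e x y)
  have hb : ∀ n : ℕ,
      (if x (e (n + (N+1))) = y (e (n + (N+1))) then (0 : ℝ) else 1) / 2 ^ ((n + (N+1)) + 1)
        ≤ ((1:ℝ)/2) ^ (n + (N+2)) := by
    intro n
    have h2 : n + (N+1) + 1 = n + (N+2) := by omega
    rw [← h2]
    exact gsD_term_le e x y (n + (N+1))
  refine le_trans (Summable.tsum_le_tsum hb hf hg) ?_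
  rw [tsum_half_pow_add]
  rw [show N + 2 = (N+1) + 1 by omega, pow_succ]
  ring_nf
  norm_num

end GsD

/-- `(x, y)` is a scrambled pair of `f` with respect to the distance function `d`. -/
def scrambledPair {Z : Type*} (d : Z → Z → ℝ) (f : Z → Z) (x y : Z) : Prop :=
  liminf (fun n : ℕ => d (f^[n] x) (f^[n] y)) atTop = 0 ∧
    0 < limsup (fun n : ℕ => d (f^[n] x) (f^[n] y)) atTop


def gshift {X Γ : Type*} (φ : Γ → Γ) : (Γ → X) → (Γ → X) := fun x => x ∘ φ

private lemma gshift_iterate {X Γ : Type*} (φ : Γ → Γ) (n : ℕ) (x : Γ → X) :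
    (gshift φ)^[n] x = fun γ => x (φ^[n] γ) := by
  induction n generalizing x with
  | zero => rfl
  | succ n ih =>
    rw [Function.iterate_succ_apply, ih]
    funext γ
    simp [gshift, Function.iterate_succ_apply']

set_option maxHeartbeats 1000000 in
/-- If `φ : Γ → Γ` has no periodic point, then `(X^Γ, σ_φ)` is Li-Yorke
sensitive: there exists `κ > 0` such that for every `x ∈ X^Γ` and every open
neighborhood `U` of `x` there exists `y ∈ U` with
`liminf D(σ_φ^n x, σ_φ^n y) = 0` and `limsup D(σ_φ^n x, σ_φ^n y) > κ`. -/
theorem stmt8 {X Γ : Type*} [TopologicalSpace X] [DiscreteTopology X] [Finite X]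
    [Nontrivial X] [Countable Γ] [Infinite Γ] (e : ℕ ≃ Γ) (φ : Γ → Γ)
    (hφ : ¬ ∃ a : Γ, ∃ n : ℕ, 1 ≤ n ∧ φ^[n] a = a) :
    ∃ κ > (0 : ℝ), ∀ x : Γ → X, ∀ U : Set (Γ → X), IsOpen U → x ∈ U →
      ∃ y ∈ U,
        liminf (fun n : ℕ => gsD e ((gshift φ)^[n] x) ((gshift φ)^[n] y)) atTop = 0 ∧
          κ < limsup (fun n : ℕ => gsD e ((gshift φ)^[n] x) ((gshift φ)^[n] y)) atTop := by
  classical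
  refine ⟨1/4, by norm_num, ?_⟩
  intro x U hU hxU
  obtain ⟨I, u, hu, hIu⟩ := isOpen_pi_iff.mp hU x hxU
  -- choose K so that for k ≥ K, φ^[4^k] (e 0) ∉ I
  have hTfin : {m : ℕ | φ^[m] (e 0) ∈ (I : Set Γ)}.Finite :=
    Set.Finite.preimage (Function.Injective.injOn (orbit_inj φ hφ (e 0))) I.finite_toSet
  obtain ⟨B0, hB0⟩ := hTfin.bddAbove
  set K : ℕ := B0 + 1 with hKdef
  set S : Set Γ := {γ | ∃ k, K ≤ k ∧ γ = φ^[4^k] (e 0)} with hSdef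
  -- the perturbed point y
  have hex : ∀ a : X, ∃ b : X, b ≠ a := fun a => exists_ne a
  choose other hother using hex
  set y : Γ → X := fun γ => if γ ∈ S then other (x γ) else x γ with hydef
  have hyS : ∀ γ ∈ S, y γ ≠ x γ := by
    intro γ hγ
    simp only [hydef, if_pos hγ]
    exact hother (x γ)
  have hyS' : ∀ γ, γ ∉ S → y γ = x γ := by
    intro γ hγ
    simp only [hydef, if_neg hγ]
  -- y ∈ U
  have hyU : y ∈ U := by
    refine hIu ?_
    intro a ha
    have haS : a ∉ S := by
      rintro ⟨k, hk, rfl⟩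
      have h1 : 4 ^ k ≤ B0 := hB0 ha
      have h2 : k < 4 ^ k := Nat.lt_pow_self (by norm_num)
      omega
    rw [hyS' a haS]
    exact (hu a ha).2
  refine ⟨y, hyU, ?_, ?_⟩
  -- notation for the distance sequence
  · -- liminf = 0
    have hmer : ∀ i : ℕ, ∃ Bi : ℕ, ∀ k : ℕ, Bi < 4 ^ k → φ^[2 * 4 ^ k] (e i) ∉ S := by
      intro i
      rcases merge_aux φ hφ (e 0) (e i) with hnever | ⟨a, b, hab⟩
      · exact ⟨0, fun k _ => by rintro ⟨j, hj, hEq⟩; exact hnever (2 * 4 ^ k) (4 ^ j) hEq⟩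
      · refine ⟨a + b, fun k hk => ?_⟩
        rintro ⟨j, hj, hEq⟩
        obtain ⟨h1, h2⟩ := hab (2 * 4 ^ k) (4 ^ j) hEq
        -- h2 : 4 ^ j + a = 2 * 4 ^ k + b, a + b < 4 ^ k : contradiction
        rcases le_or_gt j k with hjk | hjk
        · have : (4:ℕ) ^ j ≤ 4 ^ k := Nat.pow_le_pow_right (by norm_num) hjk
          omega
        · have : (4:ℕ) ^ (k + 1) ≤ 4 ^ j := Nat.pow_le_pow_right (by norm_num) hjk
          have h4 : (4:ℕ) ^ (k + 1) = 4 * 4 ^ k := by ring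
          omega
    choose Bi hBi using hmer
    have hfreq : ∀ N : ℕ, ∃ᶠ n in atTop,
        gsD e ((gshift φ)^[n] x) ((gshift φ)^[n] y) ≤ (1/2 : ℝ) ^ (N + 1) := by
      intro N
      rw [frequently_atTop]
      intro L
      set C : ℕ := (Finset.range (N + 1)).sup Bi with hCdef
      set k : ℕ := max (C + 1) L with hkdef
      refine ⟨2 * 4 ^ k, ?_, ?_⟩
      · have : k < 4 ^ k := Nat.lt_pow_self (by norm_num)
        omega
      · rw [gshift_iterate, gshift_iterate]
        refine gsD_le_pow e _ _ N fun i hi => ?_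
        have hBC : Bi i ≤ C := Finset.le_sup (by simp [Nat.lt_succ_iff, hi])
        have hklt : Bi i < 4 ^ k := by
          have : k < 4 ^ k := Nat.lt_pow_self (by norm_num)
          omega
        exact (hyS' _ (hBi i k hklt)).symm
    have hbdd : IsBoundedUnder (· ≥ ·) atTop
        (fun n : ℕ => gsD e ((gshift φ)^[n] x) ((gshift φ)^[n] y)) :=
      isBoundedUnder_of ⟨0, fun n => gsD_nonneg e _ _⟩
    have hub : IsBoundedUnder (· ≤ ·) atTop
        (fun n : ℕ => gsD e ((gshift φ)^[n] x) ((gshift φ)^[n] y)) :=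
      isBoundedUnder_of ⟨1, fun n => gsD_le_one e _ _⟩
    refine le_antisymm ?_ ?_
    · refine ge_of_tendsto'
        (((tendsto_pow_atTop_nhds_zero_of_lt_one (by norm_num : (0:ℝ) ≤ 1/2)
          (by norm_num)).comp (tendsto_add_atTop_nat 1))) fun N => ?_
      exact liminf_le_of_frequently_le (hfreq N) hbdd
    · exact le_liminf_of_le hub.isCoboundedUnder_ge
        (Eventually.of_forall fun n => gsD_nonneg e _ _)
  · -- limsup > 1/4
    have hfreq : ∃ᶠ n in atTop,
        (1/2 : ℝ) ≤ gsD e ((gshift φ)^[n] x) ((gshift φ)^[n] y) := by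
      rw [frequently_atTop]
      intro L
      set k : ℕ := max K L with hkdef
      refine ⟨4 ^ k, ?_, ?_⟩
      · have : k < 4 ^ k := Nat.lt_pow_self (by norm_num)
        omega
      · rw [gshift_iterate, gshift_iterate]
        refine gsD_ge_half e _ _ ?_
        have hS0 : φ^[4 ^ k] (e 0) ∈ S := ⟨k, le_max_left _ _, rfl⟩
        exact fun h => hyS _ hS0 h.symm
    have hub : IsBoundedUnder (· ≤ ·) atTop
        (fun n : ℕ => gsD e ((gshift φ)^[n] x) ((gshift φ)^[n] y)) :=
      isBoundedUnder_of ⟨1, fun n => gsD_le_one e _ _⟩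
    have := le_limsup_of_frequently_le hfreq hub
    linarith
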